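/- Let Γ be a strictly conditionally negative definite symmetric d×d matrix with zero diagonal. For k ∈ {1,…,d}, let Θ^{(k)} be the inverse of Σ^{(k)} = ((Γ_{ik}+Γ_{jk}-Γ_{ij})/2)_{i,j≠k}. Then for distinct k, k' and indices i, j ∈ {1,…,d}\{k'}: (a) if i,j ≠ k, then Θ^{(k')}_{ij} = Θ^{(k)}_{ij}; (b) if i ≠ k and j = k, then Θ^{(k')}_{ik} = -Σ_{l≠k} Θ^{(k)}_{il}; (c) if i = j = k, then Θ^{(k')}_{kk} = Σ_{l,m≠k} Θ^{(k)}_{lm}. -/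

import Mathlib

open Matrix

noncomputable def Pmat (d : ℕ) (k k' : Fin d) :
    Matrix {x : Fin d // x ≠ k} {x : Fin d // x ≠ k'} ℝ :=
  Matrix.of fun l i => (if l.1 = i.1 then (1:ℝ) else 0) - (if l.1 = k' then 1 else 0)

noncomputable def Smat (d : ℕ) (Γ : Matrix (Fin d) (Fin d) ℝ) (k : Fin d) :
    Matrix {x : Fin d // x ≠ k} {x : Fin d // x ≠ k} ℝ :=
  Matrix.of fun i j => (Γ i.1 k + Γ j.1 k - Γ i.1 j.1) / 2

lemma sum_subtype_ne {d : ℕ} (k : Fin d) (f : Fin d → ℝ) :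
    ∑ l : {x : Fin d // x ≠ k}, f l.1 = ∑ l ∈ Finset.univ.erase k, f l :=
  (Finset.sum_subtype (Finset.univ.erase k) (fun x => by simp) f).symm

lemma pmul {d : ℕ} (k k' : Fin d) (h : k ≠ k') :
    Pmat d k' k * Pmat d k k' = 1 := by
  ext i j
  simp only [Matrix.mul_apply, Pmat, Matrix.of_apply]
  rw [sum_subtype_ne k (fun l => ((if i.1 = l then (1:ℝ) else 0) - if i.1 = k then 1 else 0) * ((if l = j.1 then 1 else 0) - if l = k' then 1 else 0))]
  simp only [sub_mul, mul_sub, Finset.sum_sub_distrib, ite_mul, one_mul, zero_mul, mul_ite, mul_one, mul_zero]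
  rw [Matrix.one_apply]
  by_cases hik : i.1 = k <;> by_cases hjk : j.1 = k <;>
    simp_all [Finset.sum_ite_eq, Finset.sum_ite_eq', Finset.mem_erase, Subtype.ext_iff, h, h.symm, i.2, j.2, Ne.symm i.2, Ne.symm j.2, eq_comm]

lemma sum_P {d : ℕ} (k k' : Fin d) (h : k ≠ k') (i : {x : Fin d // x ≠ k'})
    (f : Fin d → ℝ) :
    ∑ l : {x : Fin d // x ≠ k}, Pmat d k k' l i * f l.1 =
      (if i.1 = k then 0 else f i.1) - f k' := by
  simp only [Pmat, Matrix.of_apply]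
  rw [sum_subtype_ne k (fun l => ((if l = i.1 then (1:ℝ) else 0) - if l = k' then 1 else 0) * f l)]
  simp only [sub_mul, Finset.sum_sub_distrib, ite_mul, one_mul, zero_mul]
  rw [Finset.sum_ite_eq' (Finset.univ.erase k) i.1 f, Finset.sum_ite_eq' (Finset.univ.erase k) k' f]
  by_cases hik : i.1 = k <;> simp [hik, Finset.mem_erase, Ne.symm h]

lemma sigma_transform {d : ℕ} (Γ : Matrix (Fin d) (Fin d) ℝ)
    (hsym : Γ.IsSymm) (hdiag : ∀ i, Γ i i = 0) (k k' : Fin d) (h : k ≠ k') :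
    Smat d Γ k' = (Pmat d k k')ᵀ * Smat d Γ k * Pmat d k k' := by
  ext i j
  simp only [Matrix.mul_apply, Matrix.transpose_apply]
  have step1 : ∀ m : {x : Fin d // x ≠ k},
      ∑ l : {x : Fin d // x ≠ k}, Pmat d k k' l i * Smat d Γ k l m =
        (if i.1 = k then 0 else (Γ i.1 k + Γ m.1 k - Γ i.1 m.1)/2)
          - (Γ k' k + Γ m.1 k - Γ k' m.1)/2 := by
    intro m
    exact sum_P k k' h i (fun a => (Γ a k + Γ m.1 k - Γ a m.1)/2)
  calc Smat d Γ k' i j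
      = ∑ m : {x : Fin d // x ≠ k}, Pmat d k k' m j *
          (((if i.1 = k then 0 else (Γ i.1 k + Γ m.1 k - Γ i.1 m.1)/2)
            - (Γ k' k + Γ m.1 k - Γ k' m.1)/2)) := by
        rw [sum_P k k' h j (fun b =>
          (if i.1 = k then 0 else (Γ i.1 k + Γ b k - Γ i.1 b)/2)
            - (Γ k' k + Γ b k - Γ k' b)/2)]
        have hji := hsym.apply i.1 j.1
        have hjk' := hsym.apply k' j.1
        have hik' := hsym.apply k' i.1
        have hkk' := hsym.apply k' k
        by_cases hik : i.1 = k <;> by_cases hjk : j.1 = k <;>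
          simp_all [Smat, hdiag] <;> ring
    _ = ∑ m : {x : Fin d // x ≠ k},
          (∑ l : {x : Fin d // x ≠ k}, Pmat d k k' l i * Smat d Γ k l m) * Pmat d k k' m j := by
        refine Finset.sum_congr rfl fun m _ => ?_
        rw [step1 m, mul_comm]
    _ = ∑ m : {x : Fin d // x ≠ k}, ((Pmat d k k')ᵀ * Smat d Γ k) i m * Pmat d k k' m j := by
        refine Finset.sum_congr rfl fun m _ => ?_
        simp [Matrix.mul_apply]

lemma q_collapse1 {d : ℕ} (k k' : Fin d) (i : Fin d) (hik' : i ≠ k') (hik : i ≠ k)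
    (f : {x : Fin d // x ≠ k} → ℝ) :
    ∑ l : {x : Fin d // x ≠ k}, Pmat d k' k ⟨i, hik'⟩ l * f l = f ⟨i, hik⟩ := by
  rw [Fintype.sum_eq_single (⟨i, hik⟩ : {x : Fin d // x ≠ k})]
  · simp [Pmat, hik]
  · intro b hb
    have : i ≠ b.1 := fun h => hb (Subtype.ext h).symm
    simp [Pmat, hik, this]

lemma q_collapse2 {d : ℕ} (k k' : Fin d) (hkk' : k ≠ k')
    (f : {x : Fin d // x ≠ k} → ℝ) :
    ∑ l : {x : Fin d // x ≠ k}, Pmat d k' k ⟨k, hkk'⟩ l * f l =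
      -∑ l : {x : Fin d // x ≠ k}, f l := by
  rw [← Finset.sum_neg_distrib]
  refine Finset.sum_congr rfl fun l _ => ?_
  have : k ≠ l.1 := Ne.symm l.2
  simp [Pmat, this]

lemma inv_transform {d : ℕ} (k k' : Fin d)
    (S : Matrix {x : Fin d // x ≠ k} {x : Fin d // x ≠ k} ℝ)
    (hQP : Pmat d k' k * Pmat d k k' = 1)
    (hPQ : Pmat d k k' * Pmat d k' k = 1) :
    ((Pmat d k k')ᵀ * S * Pmat d k k')⁻¹ =
      Pmat d k' k * S⁻¹ * (Pmat d k' k)ᵀ := by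
  set P := Pmat d k k'
  set Q := Pmat d k' k
  by_cases hu : IsUnit S.det
  · refine Matrix.inv_eq_right_inv ?_
    calc Pᵀ * S * P * (Q * S⁻¹ * Qᵀ)
        = Pᵀ * S * (P * Q) * S⁻¹ * Qᵀ := by
          simp only [Matrix.mul_assoc]
      _ = Pᵀ * (S * S⁻¹) * Qᵀ := by rw [hPQ]; simp only [Matrix.mul_assoc, Matrix.mul_one]
      _ = Pᵀ * Qᵀ := by rw [Matrix.mul_nonsing_inv S hu, Matrix.mul_one]
      _ = (Q * P)ᵀ := by rw [Matrix.transpose_mul]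
      _ = 1 := by rw [hQP, Matrix.transpose_one]
  · have hu2 : ¬ IsUnit (Pᵀ * S * P).det := by
      intro hM
      apply hu
      set M := Pᵀ * S * P with hMdef
      have hright : S * (P * M⁻¹ * Pᵀ) = 1 := by
        have hS : S = Qᵀ * M * Q := by
          calc S = 1ᵀ * S * 1 := by simp
            _ = (P * Q)ᵀ * S * (P * Q) := by rw [hPQ]
            _ = Qᵀ * M * Q := by
                rw [hMdef]; simp only [Matrix.transpose_mul, Matrix.mul_assoc]
        calc S * (P * M⁻¹ * Pᵀ)
            = Qᵀ * M * (Q * P) * M⁻¹ * Pᵀ := by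
              conv_lhs => rw [hS]
              simp only [Matrix.mul_assoc]
          _ = Qᵀ * (M * M⁻¹) * Pᵀ := by
              rw [hQP]; simp only [Matrix.mul_assoc, Matrix.one_mul]
          _ = Qᵀ * Pᵀ := by rw [Matrix.mul_nonsing_inv _ hM, Matrix.mul_one]
          _ = (P * Q)ᵀ := by rw [Matrix.transpose_mul]
          _ = 1 := by rw [hPQ, Matrix.transpose_one]
      exact Matrix.isUnit_det_of_right_inverse hright
    rw [Matrix.nonsing_inv_apply_not_isUnit S hu, Matrix.nonsing_inv_apply_not_isUnit _ hu2]
    simp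

/-- Relations between the precision matrices
`Θ^{(k)} = (Σ^{(k)})⁻¹` of a Hüsler–Reiss distribution for different base points
`k` and `k'`. -/
theorem precision_matrix_relations (d : ℕ) (Γ : Matrix (Fin d) (Fin d) ℝ)
    (hsym : Γ.IsSymm) (hdiag : ∀ i, Γ i i = 0)
    (hcnd : ∀ a : Fin d → ℝ, a ≠ 0 → ∑ i, a i = 0 → a ⬝ᵥ Γ.mulVec a < 0)
    (Θ : (k : Fin d) → Matrix {x : Fin d // x ≠ k} {x : Fin d // x ≠ k} ℝ)
    (hΘ : ∀ k, Θ k = (Matrix.of fun i j : {x : Fin d // x ≠ k} =>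
      (Γ i.1 k + Γ j.1 k - Γ i.1 j.1) / 2)⁻¹)
    (k k' : Fin d) (hkk' : k ≠ k') :
    (∀ (i j : Fin d) (hik' : i ≠ k') (hjk' : j ≠ k') (hik : i ≠ k) (hjk : j ≠ k),
      Θ k' ⟨i, hik'⟩ ⟨j, hjk'⟩ = Θ k ⟨i, hik⟩ ⟨j, hjk⟩) ∧
    (∀ (i : Fin d) (hik' : i ≠ k') (hik : i ≠ k),
      Θ k' ⟨i, hik'⟩ ⟨k, hkk'⟩ = -∑ l : {x : Fin d // x ≠ k}, Θ k ⟨i, hik⟩ l) ∧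
    (Θ k' ⟨k, hkk'⟩ ⟨k, hkk'⟩ =
      ∑ l : {x : Fin d // x ≠ k}, ∑ m : {x : Fin d // x ≠ k}, Θ k l m) := by
  have hΘk : Θ k = (Smat d Γ k)⁻¹ := hΘ k
  have hΘk' : Θ k' = (Smat d Γ k')⁻¹ := hΘ k'
  have hmain : Θ k' = Pmat d k' k * Θ k * (Pmat d k' k)ᵀ := by
    rw [hΘk', hΘk, sigma_transform Γ hsym hdiag k k' hkk',
      inv_transform k k' (Smat d Γ k) (pmul k k' hkk') (pmul k' k hkk'.symm)]
  have hentry : ∀ (x y : {x : Fin d // x ≠ k'}),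
      Θ k' x y =
        ∑ m : {x : Fin d // x ≠ k}, Pmat d k' k y m *
          (∑ l : {x : Fin d // x ≠ k}, Pmat d k' k x l * Θ k l m) := by
    intro x y
    rw [hmain]
    simp only [Matrix.mul_apply, Matrix.transpose_apply]
    exact Finset.sum_congr rfl fun m _ => by rw [mul_comm]
  refine ⟨fun i j hik' hjk' hik hjk => ?_, fun i hik' hik => ?_, ?_⟩
  · rw [hentry]
    rw [q_collapse1 k k' j hjk' hjk (fun m => ∑ l, Pmat d k' k ⟨i, hik'⟩ l * Θ k l m)]
    exact q_collapse1 k k' i hik' hik _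
  · rw [hentry]
    rw [q_collapse2 k k' hkk' (fun m => ∑ l, Pmat d k' k ⟨i, hik'⟩ l * Θ k l m)]
    rw [neg_inj]
    exact Finset.sum_congr rfl fun m _ => q_collapse1 k k' i hik' hik _
  · rw [hentry]
    rw [q_collapse2 k k' hkk' (fun m => ∑ l, Pmat d k' k ⟨k, hkk'⟩ l * Θ k l m)]
    rw [← Finset.sum_neg_distrib]
    refine (?_ : _ = ∑ m : {x : Fin d // x ≠ k}, ∑ l : {x : Fin d // x ≠ k}, Θ k l m).trans Finset.sum_comm
    refine Finset.sum_congr rfl fun m _ => ?_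
    rw [q_collapse2 k k' hkk' (fun l => Θ k l m), neg_neg]
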